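/- Let E be a real inner product space and φ: E → ℝ a differentiable strictly convex function with Bregman divergence d_φ. Fix β ≤ 1 and a > 0, and let f be the power-mean generator: f(z) = ((z + a)^β − 1)/β if β ≠ 0 and f(z) = ln(z + a) if β = 0, so f'(z) = (z + a)^{β−1}. Let x_1, …, x_n ∈ E, θ ∈ E, w_i = (d_φ(x_i, θ) + a)^{β−1}, and θ̃ = (Σ_i w_i x_i)/(Σ_j w_j). Then Σ_{i=1}^n f(d_φ(x_i, θ̃)) ≤ Σ_{i=1}^n f(d_φ(x_i, θ)). -/

import Mathlib

open scoped RealInnerProductSpace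

lemma pm_scalar {β u : ℝ} (hβ : β ≤ 1) (hβ0 : β ≠ 0) (hu : 0 < u) : (u ^ β - 1) / β ≤ u - 1 := by
  rcases lt_or_gt_of_ne hβ0 with hneg | hpos
  · rw [div_le_iff_of_neg hneg]
    have h1 : Real.log u ≤ u - 1 := Real.log_le_sub_one_of_pos hu
    have h2 : 1 + Real.log u * β ≤ u ^ β := by
      rw [Real.rpow_def_of_pos hu]
      linarith [Real.add_one_le_exp (Real.log u * β)]
    nlinarith
  · rw [div_le_iff₀ hpos]
    have := rpow_one_add_le_one_add_mul_self (s := u - 1) (by linarith) hpos.le hβ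
    simp only [add_sub_cancel] at this
    linarith

/-- The Bregman divergence `d_φ(x, θ) = φ(x) − φ(θ) − ⟨x − θ, ∇φ(θ)⟩`. -/
noncomputable def bregman {E : Type*} [NormedAddCommGroup E] [InnerProductSpace ℝ E]
    [CompleteSpace E] (φ : E → ℝ) (x θ : E) : ℝ :=
  φ x - φ θ - ⟪x - θ, gradient φ θ⟫

lemma bregman_nonneg {E : Type*} [NormedAddCommGroup E] [InnerProductSpace ℝ E]
    [CompleteSpace E] {φ : E → ℝ} (hφdiff : Differentiable ℝ φ)
    (hφconv : ConvexOn ℝ Set.univ φ) (x θ : E) : 0 ≤ bregman φ x θ := by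
  set v := x - θ with hv
  set g : ℝ → ℝ := fun t => φ (θ + t • v) with hg
  have hgconv : ConvexOn ℝ Set.univ g := by
    have := hφconv.comp_affineMap (AffineMap.lineMap θ x)
    have heq : g = φ ∘ (AffineMap.lineMap θ x) := by
      funext t
      simp [hg, AffineMap.lineMap_apply, hv]
      rw [add_comm]
    rw [heq]
    simpa using this
  have hderiv : HasDerivAt g (fderiv ℝ φ θ v) 0 := by
    have hc : HasDerivAt (fun t : ℝ => θ + t • v) v 0 := by
      simpa using ((hasDerivAt_id (0:ℝ)).smul_const v).const_add θ
    have hF : HasFDerivAt φ (fderiv ℝ φ θ) ((fun t : ℝ => θ + t • v) 0) := by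
      simpa using (hφdiff θ).hasFDerivAt
    have := hF.comp_hasDerivAt (0:ℝ) hc
    exact this
  have hslope := hgconv.le_slope_of_hasDerivAt (Set.mem_univ (0:ℝ)) (Set.mem_univ (1:ℝ))
    one_pos hderiv
  have hsl : slope g 0 1 = φ x - φ θ := by
    simp [slope, hg, hv]
  have hinner : (fderiv ℝ φ θ) v = ⟪x - θ, gradient φ θ⟫ := by
    rw [gradient]
    rw [real_inner_comm]
    simp [hv]
  rw [hsl] at hslope
  rw [bregman, ← hinner]
  linarith

/-- concavity tangent inequality for the power-mean generator -/
lemma pm_tangent {β a : ℝ} (hβ : β ≤ 1) (ha : 0 < a) {f : ℝ → ℝ}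
    (hf : ∀ z : ℝ, f z = if β = 0 then Real.log (z + a) else ((z + a) ^ β - 1) / β)
    {y z : ℝ} (hy : 0 ≤ y) (hz : 0 ≤ z) :
    f y ≤ f z + (z + a) ^ (β - 1) * (y - z) := by
  have hs : (0:ℝ) < z + a := by linarith
  have ht : (0:ℝ) < y + a := by linarith
  have hu : (0:ℝ) < (y + a) / (z + a) := div_pos ht hs
  by_cases hβ0 : β = 0
  · subst hβ0
    rw [hf, hf]
    simp only [if_pos rfl, if_true]
    have hlog : Real.log ((y + a) / (z + a)) ≤ (y + a) / (z + a) - 1 :=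
      Real.log_le_sub_one_of_pos hu
    rw [Real.log_div ht.ne' hs.ne'] at hlog
    have hr : (z + a) ^ ((0:ℝ) - 1) = (z + a)⁻¹ := by
      rw [zero_sub, Real.rpow_neg_one]
    rw [hr]
    have : (y + a) / (z + a) - 1 = (z + a)⁻¹ * (y - z) := by
      field_simp
      ring
    linarith [this ▸ hlog]

  · rw [hf, hf]
    simp only [if_neg hβ0]
    have key := pm_scalar hβ hβ0 hu
    have hpow : (y + a) ^ β = (z + a) ^ β * ((y + a) / (z + a)) ^ β := by
      rw [← Real.mul_rpow hs.le hu.le]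
      rw [mul_div_cancel₀ _ hs.ne']
    have hsβ : (0:ℝ) < (z + a) ^ β := Real.rpow_pos_of_pos hs β
    have hsm : (z + a) ^ (β - 1) = (z + a) ^ β / (z + a) := by
      rw [Real.rpow_sub hs, Real.rpow_one]
    rw [hsm]
    have h2 : ((y + a) ^ β - (z + a) ^ β) / β
        = (z + a) ^ β * ((((y + a) / (z + a)) ^ β - 1) / β) := by
      rw [hpow]; ring
    have h3 : (z + a) ^ β * ((((y + a) / (z + a)) ^ β - 1) / β)
        ≤ (z + a) ^ β * ((y + a) / (z + a) - 1) :=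
      mul_le_mul_of_nonneg_left key hsβ.le
    have h4 : (z + a) ^ β * ((y + a) / (z + a) - 1) = (z + a) ^ β / (z + a) * (y - z) := by
      field_simp
      ring
    have heq : ((y + a) ^ β - 1) / β - ((z + a) ^ β - 1) / β
        = ((y + a) ^ β - (z + a) ^ β) / β := by ring
    linarith [h2, h3, h4, heq]

/-- For the power-mean generator `f(z) = ((z+a)^β − 1)/β` (with `f(z) = ln(z+a)`
for `β = 0`), `β ≤ 1`, `a > 0`, the weighted-mean update with weights
`w_i = (d_φ(x_i, θ) + a)^(β−1)` does not increase the objective. -/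
theorem power_mean_update_decreases_objective
    {E : Type*} [NormedAddCommGroup E] [InnerProductSpace ℝ E] [CompleteSpace E]
    (φ : E → ℝ) (hφdiff : Differentiable ℝ φ)
    (hφconv : StrictConvexOn ℝ Set.univ φ)
    (β a : ℝ) (hβ : β ≤ 1) (ha : 0 < a)
    (f : ℝ → ℝ)
    (hf : ∀ z : ℝ, f z = if β = 0 then Real.log (z + a) else ((z + a) ^ β - 1) / β)
    (n : ℕ) (x : Fin n → E) (θ : E)
    (w : Fin n → ℝ)
    (hw : ∀ i, w i = (bregman φ (x i) θ + a) ^ (β - 1))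
    (θnew : E) (hθnew : θnew = (∑ i, w i)⁻¹ • ∑ i, w i • x i) :
    ∑ i, f (bregman φ (x i) θnew) ≤ ∑ i, f (bregman φ (x i) θ) := by
  rcases Nat.eq_zero_or_pos n with hn | hn
  · subst hn; simp
  have hconv := hφconv.convexOn
  have hd : ∀ i, 0 ≤ bregman φ (x i) θ := fun i => bregman_nonneg hφdiff hconv _ _
  have hdn : ∀ i, 0 ≤ bregman φ (x i) θnew := fun i => bregman_nonneg hφdiff hconv _ _
  have hwpos : ∀ i, 0 < w i := by
    intro i; rw [hw i]
    exact Real.rpow_pos_of_pos (by linarith [hd i]) _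
  have hne : (Finset.univ : Finset (Fin n)).Nonempty := by
    simpa [Finset.univ_nonempty_iff] using Fin.pos_iff_nonempty.mp hn
  have hW : 0 < ∑ i, w i := Finset.sum_pos (fun i _ => hwpos i) hne
  set W := ∑ i, w i with hWdef
  have hS : ∑ i, w i • x i = W • θnew := by
    rw [hθnew, smul_inv_smul₀ hW.ne']
  -- tangent inequality pointwise
  have htan : ∀ i, f (bregman φ (x i) θnew) ≤ f (bregman φ (x i) θ)
      + w i * (bregman φ (x i) θnew - bregman φ (x i) θ) := by
    intro i
    have := pm_tangent hβ ha hf (hdn i) (hd i)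
    rw [← hw i] at this
    exact this
  -- sum of weighted inner products
  have expand : ∀ c : E, ∑ i, w i * ⟪x i - c, gradient φ c⟫
      = W * ⟪θnew - c, gradient φ c⟫ := by
    intro c
    have h1 : ∑ i, w i * ⟪x i, gradient φ c⟫ = W * ⟪θnew, gradient φ c⟫ := by
      have : ∑ i, w i * ⟪x i, gradient φ c⟫ = ⟪∑ i, w i • x i, gradient φ c⟫ := by
        rw [sum_inner]
        exact Finset.sum_congr rfl fun i _ => (real_inner_smul_left _ _ _).symm
      rw [this, hS, real_inner_smul_left]
    calc ∑ i, w i * ⟪x i - c, gradient φ c⟫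
        = ∑ i, (w i * ⟪x i, gradient φ c⟫ - w i * ⟪c, gradient φ c⟫) := by
          refine Finset.sum_congr rfl fun i _ => ?_
          rw [inner_sub_left]; ring
      _ = (∑ i, w i * ⟪x i, gradient φ c⟫) - W * ⟪c, gradient φ c⟫ := by
          rw [Finset.sum_sub_distrib, ← Finset.sum_mul]
      _ = W * ⟪θnew, gradient φ c⟫ - W * ⟪c, gradient φ c⟫ := by rw [h1]
      _ = W * ⟪θnew - c, gradient φ c⟫ := by rw [inner_sub_left]; ring
  have key : ∑ i, w i * (bregman φ (x i) θnew - bregman φ (x i) θ)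
      = -(W * bregman φ θnew θ) := by
    have e1 := expand θ
    have e2 := expand θnew
    have hz : ⟪θnew - θnew, gradient φ θnew⟫ = 0 := by simp
    rw [hz, mul_zero] at e2
    calc ∑ i, w i * (bregman φ (x i) θnew - bregman φ (x i) θ)
        = ∑ i, (w i * (φ θ - φ θnew) - w i * ⟪x i - θnew, gradient φ θnew⟫
            + w i * ⟪x i - θ, gradient φ θ⟫) := by
          refine Finset.sum_congr rfl fun i _ => ?_
          simp only [bregman]; ring
      _ = (∑ i, w i) * (φ θ - φ θnew) - (∑ i, w i * ⟪x i - θnew, gradient φ θnew⟫)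
            + ∑ i, w i * ⟪x i - θ, gradient φ θ⟫ := by
          rw [Finset.sum_add_distrib, Finset.sum_sub_distrib, ← Finset.sum_mul]
      _ = W * (φ θ - φ θnew) - 0 + W * ⟪θnew - θ, gradient φ θ⟫ := by
          rw [e1, e2, hWdef]
      _ = -(W * bregman φ θnew θ) := by
          simp only [bregman]; ring
  have hbnn : 0 ≤ bregman φ θnew θ := bregman_nonneg hφdiff hconv _ _
  have hsumle : ∑ i, w i * (bregman φ (x i) θnew - bregman φ (x i) θ) ≤ 0 := by
    rw [key]
    exact neg_nonpos_of_nonneg (mul_nonneg hW.le hbnn)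
  calc ∑ i, f (bregman φ (x i) θnew)
      ≤ ∑ i, (f (bregman φ (x i) θ)
          + w i * (bregman φ (x i) θnew - bregman φ (x i) θ)) :=
        Finset.sum_le_sum fun i _ => htan i
    _ = (∑ i, f (bregman φ (x i) θ))
          + ∑ i, w i * (bregman φ (x i) θnew - bregman φ (x i) θ) :=
        Finset.sum_add_distrib
    _ ≤ ∑ i, f (bregman φ (x i) θ) := by linarith
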